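/- arXiv:1208.5087 — 2 statements merged into one kernel-verified Lean document; each statement's English description precedes it below -/
import Mathlib

section
/- The full generator applied to the exponential of minus half the mean fitness (Appendix D): Fix K ≥ 2, θ ∈ ℝ^K with all θ_i > 0, and a symmetric matrix σ ∈ ℝ^{K×K} with σ_{K,K} = 0. Then for every x in the interior of the simplex Δ_{K-1}, L e^{−σ̄(x)/2} = −e^{−σ̄(x)/2} Q(x;σ,θ); equivalently, (1/2)[Σ_{i=1}^K x_i σ_i(x)² + Σ_{i=1}^K x_i σ_{i,i} − (1+|θ|)σ̄(x) − σ̄(x)² + Σ_{i=1}^K θ_i σ_i(x)] · e^{−σ̄(x)/2} = −L e^{−σ̄(x)/2}. -/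
open MeasureTheory Filter

noncomputable section WrightFisher

/-- The modified Jacobi polynomial `R_n^{(a,b)}`. -/
def modJacobi (a b : ℝ) (n : ℕ) (x : ℝ) : ℝ :=
  ∑ s ∈ Finset.range (n + 1),
    (Real.Gamma ((n : ℝ) + b) / (Real.Gamma ((n : ℝ) - (s : ℝ) + 1) * Real.Gamma (b + (s : ℝ)))) *
      (Real.Gamma ((n : ℝ) + a) / (Real.Gamma ((s : ℝ) + 1) * Real.Gamma (a + (n : ℝ) - (s : ℝ)))) *
      (x - 1) ^ s * x ^ (n - s)

/-- The norming constant `c_n^{(a,b)}`. -/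
def cConst (a b : ℝ) (n : ℕ) : ℝ :=
  Real.Gamma ((n : ℝ) + a) * Real.Gamma ((n : ℝ) + b) /
    ((2 * (n : ℝ) + a + b - 1) * Real.Gamma ((n : ℝ) + a + b - 1) * Real.Gamma ((n : ℝ) + 1))

/-- Inclusion of `Fin (K-1)` into `Fin K`. -/
def idx (K : ℕ) (j : Fin (K - 1)) : Fin K := Fin.castLE (Nat.sub_le K 1) j

/-- `N_j = Σ_{i>j} n_i`. -/
def Nsum (K : ℕ) (n : Fin (K - 1) → ℕ) (j : Fin (K - 1)) : ℕ :=
  ∑ i ∈ Finset.univ.filter (fun i => j < i), n i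

/-- `Θ_j = Σ_{i=j+1}^{K} θ_i` (0-indexed: sum of `θ i` for `i > j`). -/
def Tsum (K : ℕ) (θ : Fin K → ℝ) (j : Fin (K - 1)) : ℝ :=
  ∑ i ∈ Finset.univ.filter (fun i : Fin K => (j : ℕ) < (i : ℕ)), θ i

/-- `Σ_{i<j} x_i`. -/
def partialSum (K : ℕ) (x : Fin (K - 1) → ℝ) (j : Fin (K - 1)) : ℝ :=
  ∑ i ∈ Finset.univ.filter (fun i => i < j), x i

/-- The multivariate Jacobi polynomial `P_n^θ`. -/
def JacobiP (K : ℕ) (θ : Fin K → ℝ) (n : Fin (K - 1) → ℕ) (x : Fin (K - 1) → ℝ) : ℝ :=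
  ∏ j : Fin (K - 1),
    (1 - x j / (1 - partialSum K x j)) ^ (Nsum K n j) *
      modJacobi (θ (idx K j)) (Tsum K θ j + 2 * (Nsum K n j : ℝ)) (n j)
        (x j / (1 - partialSum K x j))

/-- Extend `x ∈ ℝ^{K-1}` to all `K` allele frequencies, `x_K := 1 - Σ x_i`. -/
def extendFreq (K : ℕ) (x : Fin (K - 1) → ℝ) (i : Fin K) : ℝ :=
  if h : (i : ℕ) < K - 1 then x ⟨i, h⟩ else 1 - ∑ j, x j

/-- The unnormalized Dirichlet density `Π_0`. -/
def Pi0 (K : ℕ) (θ : Fin K → ℝ) (x : Fin (K - 1) → ℝ) : ℝ :=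
  ∏ i : Fin K, extendFreq K x i ^ (θ i - 1)

/-- The norming constant `C_n^θ`. -/
def CConst (K : ℕ) (θ : Fin K → ℝ) (n : Fin (K - 1) → ℕ) : ℝ :=
  ∏ j : Fin (K - 1), cConst (θ (idx K j)) (Tsum K θ j + 2 * (Nsum K n j : ℝ)) (n j)

/-- Interior of the simplex `Δ_{K-1}`. -/
def simplexInt (K : ℕ) : Set (Fin (K - 1) → ℝ) :=
  {x | (∀ i, 0 < x i) ∧ ∑ i, x i < 1}

/-- Open unit cube `(0,1)^{K-1}`. -/
def openCube (K : ℕ) : Set (Fin (K - 1) → ℝ) :=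
  {ξ | ∀ i, ξ i ∈ Set.Ioo (0 : ℝ) 1}

/-- The stick-breaking map `T(ξ)_i = ξ_i Π_{j<i}(1-ξ_j)`. -/
def stickBreak (K : ℕ) (ξ : Fin (K - 1) → ℝ) : Fin (K - 1) → ℝ :=
  fun i => ξ i * ∏ j ∈ Finset.univ.filter (fun j => j < i), (1 - ξ j)

/-- Inverse of the stick-breaking map, `S(x)_i = x_i / (1 - Σ_{j<i} x_j)`. -/
def stickBreakInv (K : ℕ) (x : Fin (K - 1) → ℝ) : Fin (K - 1) → ℝ :=
  fun i => x i / (1 - partialSum K x i)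

/-- Partial derivative `∂f/∂x_i`. -/
def pd (K : ℕ) (f : (Fin (K - 1) → ℝ) → ℝ) (i : Fin (K - 1)) (x : Fin (K - 1) → ℝ) : ℝ :=
  fderiv ℝ f x (Pi.single i 1)

/-- `|θ| = Σ θ_i`. -/
def thetaTot (K : ℕ) (θ : Fin K → ℝ) : ℝ := ∑ i, θ i

/-- The neutral Wright-Fisher generator `L_0`. -/
def L0 (K : ℕ) (θ : Fin K → ℝ) (f : (Fin (K - 1) → ℝ) → ℝ) (x : Fin (K - 1) → ℝ) : ℝ :=
  (1 / 2) * ∑ i, ∑ j, x i * ((if i = j then (1 : ℝ) else 0) - x j) * pd K (pd K f j) i x +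
    (1 / 2) * ∑ i, (θ (idx K i) - thetaTot K θ * x i) * pd K f i x

/-- Marginal fitness `σ_i(x)`. -/
def margFit (K : ℕ) (σ : Fin K → Fin K → ℝ) (x : Fin (K - 1) → ℝ) (i : Fin K) : ℝ :=
  ∑ j, σ i j * extendFreq K x j

/-- Mean fitness `σ̄(x)`. -/
def meanFit (K : ℕ) (σ : Fin K → Fin K → ℝ) (x : Fin (K - 1) → ℝ) : ℝ :=
  ∑ i, ∑ j, σ i j * extendFreq K x i * extendFreq K x j

/-- The selection part `L_σ` of the generator. -/
def Lsel (K : ℕ) (σ : Fin K → Fin K → ℝ) (f : (Fin (K - 1) → ℝ) → ℝ)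
    (x : Fin (K - 1) → ℝ) : ℝ :=
  ∑ i, x i * (margFit K σ x (idx K i) - meanFit K σ x) * pd K f i x

/-- The full generator `L = L_0 + L_σ`. -/
def Lfull (K : ℕ) (θ : Fin K → ℝ) (σ : Fin K → Fin K → ℝ) (f : (Fin (K - 1) → ℝ) → ℝ)
    (x : Fin (K - 1) → ℝ) : ℝ :=
  L0 K θ f x + Lsel K σ f x

/-- The polynomial `Q(x; σ, θ)`. -/
def Qpoly (K : ℕ) (θ : Fin K → ℝ) (σ : Fin K → Fin K → ℝ) (x : Fin (K - 1) → ℝ) : ℝ :=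
  (1 / 2) * (∑ i, extendFreq K x i * margFit K σ x i ^ 2
    + ∑ i, θ i * margFit K σ x i
    + ∑ i, extendFreq K x i * σ i i
    - (1 + thetaTot K θ) * meanFit K σ x
    - meanFit K σ x ^ 2)

/-- Neutral eigenvalue `λ^θ_{|n|} = |n|(|n|-1+|θ|)/2`. -/
def lamNeutral (K : ℕ) (θ : Fin K → ℝ) (n : Fin (K - 1) → ℕ) : ℝ :=
  (1 / 2) * (∑ j, (n j : ℝ)) * ((∑ j, (n j : ℝ)) - 1 + thetaTot K θ)

/-- Recurrence constants `G^{(a,b)}_{n,m}`. -/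
def Gc (a b : ℝ) (n m : ℕ) : ℝ :=
  if n = m + 1 then
    ((n : ℝ) + a - 1) * ((n : ℝ) + b - 1) /
      ((2 * (n : ℝ) + a + b - 1) * (2 * (n : ℝ) + a + b - 2))
  else if n = m then
    (if n = 0 then a / (a + b)
     else 1 / 2 - (b - a) * (a + b - 2) / (2 * (2 * (n : ℝ) + a + b) * (2 * (n : ℝ) + a + b - 2)))
  else if m = n + 1 then
    ((n : ℝ) + 1) * ((n : ℝ) + a + b - 1) / ((2 * (n : ℝ) + a + b) * (2 * (n : ℝ) + a + b - 1))
  else 0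

/-- Recurrence constants `H^{(a,b)}_{n,m}`. -/
def Hc (a b : ℝ) (n m : ℕ) : ℝ :=
  if m = n then
    ((n : ℝ) + a + b - 1) * ((n : ℝ) + a + b) /
      ((2 * (n : ℝ) + a + b - 1) * (2 * (n : ℝ) + a + b))
  else if n = m + 1 then
    (if n = 1 then -2 * a / (a + b + 2)
     else if 1 < n then
       -2 * ((n : ℝ) + a - 1) * ((n : ℝ) + a + b - 1) /
         ((2 * (n : ℝ) + a + b - 2) * (2 * (n : ℝ) + a + b))
     else 0)
  else if n = m + 2 then
    (if 1 < n then
       ((n : ℝ) + a - 2) * ((n : ℝ) + a - 1) /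
         ((2 * (n : ℝ) + a + b - 2) * (2 * (n : ℝ) + a + b - 1))
     else 0)
  else 0

/-- Recurrence constants `I^{(a,b)}_{n,m}`. -/
def Ic (a b : ℝ) (n m : ℕ) : ℝ :=
  if m = n + 1 then
    (if n = 0 then -1 / (a + b)
     else -(((n : ℝ) + 1) * ((n : ℝ) + a + b - 1)) /
       ((2 * (n : ℝ) + a + b - 1) * (2 * (n : ℝ) + a + b)))
  else if m = n then
    (if n = 0 then b / (a + b)
     else if n = 1 then (b ^ 2 + a * (b + 2)) / ((a + b) * (a + b + 2))
     else (b ^ 2 + 2 * (n : ℝ) * ((n : ℝ) + a - 1) + b * (2 * (n : ℝ) + a - 2)) /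
       ((2 * (n : ℝ) + a + b - 2) * (2 * (n : ℝ) + a + b)))
  else if n = m + 1 then
    (if n = 1 then -(a * b) / ((a + b) * (a + b + 1))
     else -(((n : ℝ) + a - 1) * ((n : ℝ) + b - 1)) /
       ((2 * (n : ℝ) + a + b - 2) * (2 * (n : ℝ) + a + b - 1)))
  else 0

/-- Recurrence constants `J^{(a,b)}_{n,m}`. -/
def Jc (a b : ℝ) (n m : ℕ) : ℝ :=
  if m = n then
    (if n = 0 then (b - 1) * (b - 2) / ((a + b - 1) * (a + b - 2))
     else ((n : ℝ) + b - 2) * ((n : ℝ) + b - 1) /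
       ((2 * (n : ℝ) + a + b - 2) * (2 * (n : ℝ) + a + b - 1)))
  else if m = n + 1 then
    -2 * ((n : ℝ) + 1) * ((n : ℝ) + b - 1) / ((2 * (n : ℝ) + a + b - 2) * (2 * (n : ℝ) + a + b))
  else if m = n + 2 then
    ((n : ℝ) + 1) * ((n : ℝ) + 2) / ((2 * (n : ℝ) + a + b - 1) * (2 * (n : ℝ) + a + b))
  else 0

/-- The index set `M_i(n)`. -/
def indexSet (K : ℕ) (i : Fin (K - 1)) (n : Fin (K - 1) → ℕ) : Set (Fin (K - 1) → ℕ) :=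
  {m | (∀ j, i < j → Nsum K m j = Nsum K n j) ∧
       (∀ j, j ≤ i → |(Nsum K m j : ℤ) - (Nsum K n j : ℤ)| ≤ 1)}

/-- The explicit recurrence coefficient `r^{(θ,i)}_{n,m}`. -/
def rCoeff (K : ℕ) (θ : Fin K → ℝ) (i : Fin (K - 1)) (n m : Fin (K - 1) → ℕ) : ℝ :=
  Gc (θ (idx K i)) (Tsum K θ i + 2 * (Nsum K n i : ℝ)) (n i) (m i) *
    ∏ j ∈ Finset.univ.filter (fun j => j < i),
      (if Nsum K m j = Nsum K n j + 1 then
         Hc (θ (idx K j)) (Tsum K θ j + 2 * (Nsum K n j : ℝ)) (n j) (m j)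
       else if Nsum K m j = Nsum K n j then
         Ic (θ (idx K j)) (Tsum K θ j + 2 * (Nsum K n j : ℝ)) (n j) (m j)
       else if Nsum K n j = Nsum K m j + 1 then
         Jc (θ (idx K j)) (Tsum K θ j + 2 * (Nsum K n j : ℝ)) (n j) (m j)
       else 0)

/-- `Θ_{i-1} = Σ_{l=i}^K θ_l` (0-indexed: sum of `θ l` for `l ≥ i`). -/
def ThetaGe (K : ℕ) (θ : Fin K → ℝ) (i : Fin (K - 1)) : ℝ :=
  ∑ l ∈ Finset.univ.filter (fun l : Fin K => (i : ℕ) ≤ (l : ℕ)), θ l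

end WrightFisher


noncomputable section AuxWF

open Finset

/-- Derivative (as a continuous linear map) of `fun z => extendFreq (m+2) z k`. -/
def Dlin (m : ℕ) (k : Fin (m + 2)) : (Fin (m + 1) → ℝ) →L[ℝ] ℝ :=
  if h : (k : ℕ) < m + 1 then ContinuousLinearMap.proj ⟨(k : ℕ), h⟩
  else -(∑ j : Fin (m + 1), ContinuousLinearMap.proj j)

lemma hasFDerivAt_extendFreq (m : ℕ) (k : Fin (m + 2)) (y : Fin (m + 1) → ℝ) :
    HasFDerivAt (fun z : Fin (m + 1) → ℝ => extendFreq (m + 2) z k) (Dlin m k) y := by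
  unfold Dlin
  by_cases h : (k : ℕ) < m + 1
  · rw [dif_pos h]
    have he : (fun z : Fin (m + 1) → ℝ => extendFreq (m + 2) z k)
        = fun z => z ⟨(k : ℕ), h⟩ := by
      funext z; unfold extendFreq
      rw [dif_pos (show (k : ℕ) < m + 2 - 1 from h)]
    rw [he]
    exact hasFDerivAt_apply _ y
  · rw [dif_neg h]
    have he : (fun z : Fin (m + 1) → ℝ => extendFreq (m + 2) z k)
        = fun z => 1 - ∑ j, z j := by
      funext z; unfold extendFreq
      rw [dif_neg (show ¬ ((k : ℕ) < m + 2 - 1) from h)]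
      rfl
    rw [he]
    have hs := HasFDerivAt.fun_sum (𝕜 := ℝ) fun (j : Fin (m + 1)) (_ : j ∈ Finset.univ) =>
      hasFDerivAt_apply (𝕜 := ℝ) j y
    simpa using (hasFDerivAt_const (1 : ℝ) y).fun_sub hs

lemma Dlin_single (m : ℕ) (k : Fin (m + 2)) (i : Fin (m + 1)) :
    Dlin m k (Pi.single i 1) =
      (if k = idx (m + 2) i then 1 else 0) - (if k = Fin.last (m + 1) then 1 else 0) := by
  unfold Dlin
  by_cases h : (k : ℕ) < m + 1
  · rw [dif_pos h]
    have h1 : k ≠ Fin.last (m + 1) := by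
      intro hk
      rw [hk] at h
      simp [Fin.last] at h
    rw [if_neg h1, sub_zero, ContinuousLinearMap.proj_apply, Pi.single_apply]
    have h2 : ((⟨(k : ℕ), h⟩ : Fin (m + 1)) = i) ↔ (k = idx (m + 2) i) := by
      rw [Fin.ext_iff, Fin.ext_iff]
      simp [idx]
    split_ifs with ha hb hb
    · rfl
    · exact absurd (h2.mp ha) hb
    · exact absurd (h2.mpr hb) ha
    · rfl
  · rw [dif_neg h]
    have hk : k = Fin.last (m + 1) := by
      apply Fin.ext
      have := k.isLt
      simp only [Fin.val_last]
      omega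
    have h2 : k ≠ idx (m + 2) i := by
      rw [hk]
      intro hc
      have := congrArg Fin.val hc
      simp [idx, Fin.val_last] at this
      omega
    rw [if_neg h2, if_pos hk]
    simp [Finset.sum_pi_single']

lemma sum_mul_dX (m : ℕ) (i : Fin (m + 1)) (f : Fin (m + 2) → ℝ) :
    ∑ k : Fin (m + 2), f k * Dlin m k (Pi.single i 1)
      = f (idx (m + 2) i) - f (Fin.last (m + 1)) := by
  simp only [Dlin_single, mul_sub, mul_ite, mul_one, mul_zero, Finset.sum_sub_distrib,
    Finset.sum_ite_eq', Finset.mem_univ, if_true]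

lemma hasFDerivAt_margFit (m : ℕ) (σ : Fin (m + 2) → Fin (m + 2) → ℝ) (k : Fin (m + 2))
    (y : Fin (m + 1) → ℝ) :
    HasFDerivAt (fun z => margFit (m + 2) σ z k) (∑ j : Fin (m + 2), σ k j • Dlin m j) y := by
  unfold margFit
  exact HasFDerivAt.fun_sum fun j _ => (hasFDerivAt_extendFreq m j y).const_mul (σ k j)

lemma Asum_apply (m : ℕ) (σ : Fin (m + 2) → Fin (m + 2) → ℝ) (k : Fin (m + 2)) (i : Fin (m + 1)) :
    (∑ j : Fin (m + 2), σ k j • Dlin m j) (Pi.single i 1)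
      = σ k (idx (m + 2) i) - σ k (Fin.last (m + 1)) := by
  simp only [ContinuousLinearMap.coe_sum', Finset.sum_apply, ContinuousLinearMap.coe_smul',
    Pi.smul_apply, smul_eq_mul]
  exact sum_mul_dX m i (σ k)

/-- The derivative of `meanFit`. -/
def Mclm (m : ℕ) (σ : Fin (m + 2) → Fin (m + 2) → ℝ) (y : Fin (m + 1) → ℝ) :
    (Fin (m + 1) → ℝ) →L[ℝ] ℝ :=
  ∑ k : Fin (m + 2), ∑ l : Fin (m + 2),
    ((σ k l * extendFreq (m + 2) y k) • Dlin m l + extendFreq (m + 2) y l • (σ k l • Dlin m k))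

lemma hasFDerivAt_meanFit (m : ℕ) (σ : Fin (m + 2) → Fin (m + 2) → ℝ) (y : Fin (m + 1) → ℝ) :
    HasFDerivAt (fun z => meanFit (m + 2) σ z) (Mclm m σ y) y := by
  unfold meanFit Mclm
  exact HasFDerivAt.fun_sum fun k _ => HasFDerivAt.fun_sum fun l _ =>
    ((hasFDerivAt_extendFreq m k y).const_mul (σ k l)).mul (hasFDerivAt_extendFreq m l y)

lemma Mclm_apply (m : ℕ) (σ : Fin (m + 2) → Fin (m + 2) → ℝ)
    (hσ : ∀ a b, σ a b = σ b a) (y : Fin (m + 1) → ℝ) (i : Fin (m + 1)) :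
    Mclm m σ y (Pi.single i 1)
      = 2 * (margFit (m + 2) σ y (idx (m + 2) i) - margFit (m + 2) σ y (Fin.last (m + 1))) := by
  unfold Mclm
  simp only [ContinuousLinearMap.coe_sum', Finset.sum_apply, ContinuousLinearMap.add_apply,
    ContinuousLinearMap.coe_smul', Pi.smul_apply, smul_eq_mul]
  have key : ∀ k : Fin (m + 2),
      (∑ l : Fin (m + 2), (σ k l * extendFreq (m + 2) y k * Dlin m l (Pi.single i 1)
        + extendFreq (m + 2) y l * (σ k l * Dlin m k (Pi.single i 1))))
      = (∑ l : Fin (m + 2), (σ k l * extendFreq (m + 2) y k) * Dlin m l (Pi.single i 1))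
        + margFit (m + 2) σ y k * Dlin m k (Pi.single i 1) := by
    intro k
    rw [Finset.sum_add_distrib]
    congr 1
    unfold margFit
    rw [Finset.sum_mul]
    exact Finset.sum_congr rfl fun l _ => by ring
  rw [Finset.sum_congr rfl fun k _ => key k, Finset.sum_add_distrib,
    sum_mul_dX m i (fun k => margFit (m + 2) σ y k),
    Finset.sum_congr rfl fun k _ => sum_mul_dX m i (fun l => σ k l * extendFreq (m + 2) y k),
    Finset.sum_sub_distrib]
  have h1 : ∀ c : Fin (m + 2), ∑ k : Fin (m + 2), σ k c * extendFreq (m + 2) y k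
      = margFit (m + 2) σ y c := by
    intro c
    unfold margFit
    exact Finset.sum_congr rfl fun k _ => by rw [hσ k c]
  rw [h1, h1]
  ring

lemma hasFDerivAt_expMF (m : ℕ) (σ : Fin (m + 2) → Fin (m + 2) → ℝ) (y : Fin (m + 1) → ℝ) :
    HasFDerivAt (fun z : Fin (m + 1) → ℝ => Real.exp (-meanFit (m + 2) σ z / 2))
      (Real.exp (-meanFit (m + 2) σ y / 2) • ((-(1 : ℝ) / 2) • Mclm m σ y)) y := by
  have h := ((hasFDerivAt_meanFit m σ y).const_mul (-(1 : ℝ) / 2)).exp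
  have e1 : ∀ z : Fin (m + 1) → ℝ, (-(1 : ℝ) / 2) * meanFit (m + 2) σ z
      = -meanFit (m + 2) σ z / 2 := fun z => by ring
  simp only [e1] at h
  exact h

lemma pd_exp (m : ℕ) (σ : Fin (m + 2) → Fin (m + 2) → ℝ)
    (hσ : ∀ a b, σ a b = σ b a) (i : Fin (m + 1)) (y : Fin (m + 1) → ℝ) :
    pd (m + 2) (fun z => Real.exp (-meanFit (m + 2) σ z / 2)) i y
      = (margFit (m + 2) σ y (Fin.last (m + 1)) - margFit (m + 2) σ y (idx (m + 2) i))
          * Real.exp (-meanFit (m + 2) σ y / 2) := by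
  unfold pd
  show (fderiv ℝ (fun z : Fin (m + 1) → ℝ => Real.exp (-meanFit (m + 2) σ z / 2)) y)
      (Pi.single i 1)
    = (margFit (m + 2) σ y (Fin.last (m + 1)) - margFit (m + 2) σ y (idx (m + 2) i))
        * Real.exp (-meanFit (m + 2) σ y / 2)
  rw [(hasFDerivAt_expMF m σ y).fderiv]
  simp only [ContinuousLinearMap.coe_smul', Pi.smul_apply, smul_eq_mul,
    Mclm_apply m σ hσ y i]
  ring

lemma pd_pd_exp (m : ℕ) (σ : Fin (m + 2) → Fin (m + 2) → ℝ)
    (hσ : ∀ a b, σ a b = σ b a) (j i : Fin (m + 1)) (x : Fin (m + 1) → ℝ) :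
    pd (m + 2) (pd (m + 2) (fun z => Real.exp (-meanFit (m + 2) σ z / 2)) j) i x
      = Real.exp (-meanFit (m + 2) σ x / 2) *
          ((margFit (m + 2) σ x (Fin.last (m + 1)) - margFit (m + 2) σ x (idx (m + 2) j))
            * (margFit (m + 2) σ x (Fin.last (m + 1)) - margFit (m + 2) σ x (idx (m + 2) i))
          + σ (Fin.last (m + 1)) (idx (m + 2) i) - σ (Fin.last (m + 1)) (Fin.last (m + 1))
          - σ (idx (m + 2) j) (idx (m + 2) i) + σ (idx (m + 2) j) (Fin.last (m + 1))) := by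
  have hfun : pd (m + 2) (fun z => Real.exp (-meanFit (m + 2) σ z / 2)) j
      = fun y => (margFit (m + 2) σ y (Fin.last (m + 1)) - margFit (m + 2) σ y (idx (m + 2) j))
          * Real.exp (-meanFit (m + 2) σ y / 2) := funext fun y => pd_exp m σ hσ j y
  rw [hfun]
  unfold pd
  show (fderiv ℝ (fun y : Fin (m + 1) → ℝ =>
      (margFit (m + 2) σ y (Fin.last (m + 1)) - margFit (m + 2) σ y (idx (m + 2) j))
        * Real.exp (-meanFit (m + 2) σ y / 2)) x) (Pi.single i 1) = _
  have h1 := (hasFDerivAt_margFit m σ (Fin.last (m + 1)) x).sub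
    (hasFDerivAt_margFit m σ (idx (m + 2) j) x)
  have h2 := hasFDerivAt_expMF m σ x
  have h3 : HasFDerivAt (fun y : Fin (m + 1) → ℝ =>
      (margFit (m + 2) σ y (Fin.last (m + 1)) - margFit (m + 2) σ y (idx (m + 2) j))
        * Real.exp (-meanFit (m + 2) σ y / 2))
      ((margFit (m + 2) σ x (Fin.last (m + 1)) - margFit (m + 2) σ x (idx (m + 2) j))
          • (Real.exp (-meanFit (m + 2) σ x / 2) • ((-(1 : ℝ) / 2) • Mclm m σ x))
        + Real.exp (-meanFit (m + 2) σ x / 2)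
          • (∑ l : Fin (m + 2), σ (Fin.last (m + 1)) l • Dlin m l
              - ∑ l : Fin (m + 2), σ (idx (m + 2) j) l • Dlin m l)) x := h1.mul h2
  rw [h3.fderiv]
  simp only [ContinuousLinearMap.add_apply, ContinuousLinearMap.coe_smul', Pi.smul_apply,
    smul_eq_mul, ContinuousLinearMap.coe_sub', Pi.sub_apply, Mclm_apply m σ hσ x i,
    Asum_apply m σ]
  ring

lemma sum_fin (m : ℕ) (f : Fin (m + 2) → ℝ) :
    ∑ k : Fin (m + 2), f k = (∑ i : Fin (m + 1), f (idx (m + 2) i)) + f (Fin.last (m + 1)) :=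
  Fin.sum_univ_castSucc (n := m + 1) (f := f)

lemma extend_idx (m : ℕ) (x : Fin (m + 1) → ℝ) (i : Fin (m + 1)) :
    extendFreq (m + 2) x (idx (m + 2) i) = x i := by
  unfold extendFreq idx
  rw [dif_pos (show ((Fin.castLE (Nat.sub_le (m + 2) 1) i : Fin (m + 2 - 1 + 1)) : ℕ) < m + 2 - 1 from i.isLt)]
  rfl

lemma extend_last (m : ℕ) (x : Fin (m + 1) → ℝ) :
    extendFreq (m + 2) x (Fin.last (m + 1)) = 1 - ∑ j : Fin (m + 1), x j := by
  unfold extendFreq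
  rw [dif_neg (by simp only [Fin.val_last]; omega)]
  rfl

end AuxWF

/-- Appendix D: `L e^{-σ̄/2} = -e^{-σ̄/2} Q(·;σ,θ)` on the interior of the
simplex. -/
theorem generator_on_exp_meanFit (K : ℕ) (hK : 2 ≤ K) (θ : Fin K → ℝ)
    (hθ : ∀ i, 0 < θ i) (σ : Fin K → Fin K → ℝ) (hσ : ∀ i j, σ i j = σ j i)
    (hσK : σ ⟨K - 1, by omega⟩ ⟨K - 1, by omega⟩ = 0)
    (x : Fin (K - 1) → ℝ) (hx : x ∈ simplexInt K) :
    Lfull K θ σ (fun y => Real.exp (-meanFit K σ y / 2)) x =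
      -Real.exp (-meanFit K σ x / 2) * Qpoly K θ σ x := by
  obtain ⟨m, rfl⟩ : ∃ m, K = m + 2 := ⟨K - 2, by omega⟩
  clear hK hθ hσK hx
  unfold Lfull L0 Lsel Qpoly thetaTot
  simp only [pd_pd_exp m σ hσ, pd_exp m σ hσ]
  have hXid : ∀ i : Fin (m + 2 - 1), extendFreq (m + 2) x (idx (m + 2) i) = x i := extend_idx m x
  have hXL : extendFreq (m + 2) x (Fin.last (m + 1)) = 1 - ∑ j : Fin (m + 2 - 1), x j := extend_last m x
  have master : ∀ f : Fin (m + 2) → ℝ,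
      ∑ i : Fin (m + 2 - 1), x i * f (idx (m + 2) i)
        = (∑ k : Fin (m + 2), extendFreq (m + 2) x k * f k) - extendFreq (m + 2) x (Fin.last (m + 1)) * f (Fin.last (m + 1)) := by
    intro f
    have e : ∑ k : Fin (m + 2), extendFreq (m + 2) x k * f k
        = (∑ i : Fin (m + 2 - 1), extendFreq (m + 2) x (idx (m + 2) i) * f (idx (m + 2) i)) + extendFreq (m + 2) x (Fin.last (m + 1)) * f (Fin.last (m + 1)) :=
      sum_fin m (fun k => extendFreq (m + 2) x k * f k)
    rw [show (∑ i : Fin (m + 2 - 1), extendFreq (m + 2) x (idx (m + 2) i) * f (idx (m + 2) i))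
        = ∑ i : Fin (m + 2 - 1), x i * f (idx (m + 2) i) from
      Finset.sum_congr rfl fun i _ => by rw [hXid i]] at e
    linarith [e]
  have hrow : ∀ c : Fin (m + 2), ∑ k : Fin (m + 2), extendFreq (m + 2) x k * σ c k = margFit (m + 2) σ x c := by
    intro c
    unfold margFit
    exact Finset.sum_congr rfl fun k _ => mul_comm _ _
  have hcol : ∀ c : Fin (m + 2), ∑ k : Fin (m + 2), extendFreq (m + 2) x k * σ k c = margFit (m + 2) σ x c := by
    intro c
    rw [← hrow c]
    exact Finset.sum_congr rfl fun k _ => by rw [hσ k c]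
  have hS1 : ∑ k : Fin (m + 2), extendFreq (m + 2) x k * margFit (m + 2) σ x k = meanFit (m + 2) σ x := by
    unfold meanFit margFit
    exact Finset.sum_congr rfl fun k _ =>
      (Finset.mul_sum _ _ _).trans (Finset.sum_congr rfl fun l _ => by ring)
  have b1 : ∑ i : Fin (m + 2 - 1), x i = 1 - extendFreq (m + 2) x (Fin.last (m + 1)) := by
    rw [hXL]; ring
  have c2 : ∑ i : Fin (m + 2 - 1), x i * margFit (m + 2) σ x (idx (m + 2) i) = meanFit (m + 2) σ x - extendFreq (m + 2) x (Fin.last (m + 1)) * margFit (m + 2) σ x (Fin.last (m + 1)) := by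
    have e := master (fun k => margFit (m + 2) σ x k); rwa [hS1] at e
  have c3 : ∑ i : Fin (m + 2 - 1), x i * margFit (m + 2) σ x (idx (m + 2) i) ^ 2
      = (∑ k : Fin (m + 2), extendFreq (m + 2) x k * margFit (m + 2) σ x k ^ 2) - extendFreq (m + 2) x (Fin.last (m + 1)) * margFit (m + 2) σ x (Fin.last (m + 1)) ^ 2 :=
    master (fun k => margFit (m + 2) σ x k ^ 2)
  have c4 : ∑ i : Fin (m + 2 - 1), x i * σ (idx (m + 2) i) (idx (m + 2) i)
      = (∑ k : Fin (m + 2), extendFreq (m + 2) x k * σ k k) - extendFreq (m + 2) x (Fin.last (m + 1)) * σ (Fin.last (m + 1)) (Fin.last (m + 1)) :=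
    master (fun k => σ k k)
  have c5 : ∀ c : Fin (m + 2), ∑ i : Fin (m + 2 - 1), x i * σ (idx (m + 2) i) c
      = margFit (m + 2) σ x c - extendFreq (m + 2) x (Fin.last (m + 1)) * σ (Fin.last (m + 1)) c := by
    intro c
    have e := master (fun k => σ k c); rwa [hcol c] at e
  have c6 : ∀ c : Fin (m + 2), ∑ i : Fin (m + 2 - 1), x i * σ c (idx (m + 2) i)
      = margFit (m + 2) σ x c - extendFreq (m + 2) x (Fin.last (m + 1)) * σ c (Fin.last (m + 1)) := by
    intro c
    have e := master (fun k => σ c k); rwa [hrow c] at e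
  have d1 : ∑ i : Fin (m + 2 - 1), θ (idx (m + 2) i) = (∑ k : Fin (m + 2), θ k) - θ (Fin.last (m + 1)) := by
    have e : ∑ k : Fin (m + 2), θ k
        = (∑ i : Fin (m + 2 - 1), θ (idx (m + 2) i)) + θ (Fin.last (m + 1)) := sum_fin m θ
    linarith [e]
  have d2 : ∑ i : Fin (m + 2 - 1), θ (idx (m + 2) i) * margFit (m + 2) σ x (idx (m + 2) i)
      = (∑ k : Fin (m + 2), θ k * margFit (m + 2) σ x k) - θ (Fin.last (m + 1)) * margFit (m + 2) σ x (Fin.last (m + 1)) := by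
    have e : ∑ k : Fin (m + 2), θ k * margFit (m + 2) σ x k
        = (∑ i : Fin (m + 2 - 1), θ (idx (m + 2) i) * margFit (m + 2) σ x (idx (m + 2) i)) + θ (Fin.last (m + 1)) * margFit (m + 2) σ x (Fin.last (m + 1)) :=
      sum_fin m (fun k => θ k * margFit (m + 2) σ x k)
    linarith [e]
  have hdiag0 : ∀ T : Fin (m + 2 - 1) → Fin (m + 2 - 1) → ℝ,
      (∑ i : Fin (m + 2 - 1), ∑ j : Fin (m + 2 - 1), x i * ((if i = j then (1:ℝ) else 0) - x j) * T i j)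
        = (∑ i : Fin (m + 2 - 1), x i * T i i)
          - ∑ i : Fin (m + 2 - 1), ∑ j : Fin (m + 2 - 1), x i * x j * T i j := by
    intro T
    rw [← Finset.sum_sub_distrib]
    refine Finset.sum_congr rfl fun i _ => ?_
    have key : ∀ j : Fin (m + 2 - 1), x i * ((if i = j then (1:ℝ) else 0) - x j) * T i j
        = (if i = j then x i * T i j else 0) - x i * x j * T i j := by
      intro j
      split_ifs <;> ring
    rw [Finset.sum_congr rfl fun j _ => key j, Finset.sum_sub_distrib, Finset.sum_ite_eq]
    simp
  have hdiag : (∑ i : Fin (m + 2 - 1), ∑ j : Fin (m + 2 - 1),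
        x i * ((if i = j then (1:ℝ) else 0) - x j) * (Real.exp (-meanFit (m + 2) σ x / 2) * ((margFit (m + 2) σ x (Fin.last (m + 1)) - margFit (m + 2) σ x (idx (m + 2) j)) * (margFit (m + 2) σ x (Fin.last (m + 1)) - margFit (m + 2) σ x (idx (m + 2) i)) + σ (Fin.last (m + 1)) (idx (m + 2) i) - σ (Fin.last (m + 1)) (Fin.last (m + 1)) - σ (idx (m + 2) j) (idx (m + 2) i) + σ (idx (m + 2) j) (Fin.last (m + 1)))))
      = (∑ i : Fin (m + 2 - 1), x i * (Real.exp (-meanFit (m + 2) σ x / 2) * ((margFit (m + 2) σ x (Fin.last (m + 1)) - margFit (m + 2) σ x (idx (m + 2) i)) * (margFit (m + 2) σ x (Fin.last (m + 1)) - margFit (m + 2) σ x (idx (m + 2) i)) + σ (Fin.last (m + 1)) (idx (m + 2) i) - σ (Fin.last (m + 1)) (Fin.last (m + 1)) - σ (idx (m + 2) i) (idx (m + 2) i) + σ (idx (m + 2) i) (Fin.last (m + 1)))))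
        - ∑ i : Fin (m + 2 - 1), ∑ j : Fin (m + 2 - 1), x i * x j * (Real.exp (-meanFit (m + 2) σ x / 2) * ((margFit (m + 2) σ x (Fin.last (m + 1)) - margFit (m + 2) σ x (idx (m + 2) j)) * (margFit (m + 2) σ x (Fin.last (m + 1)) - margFit (m + 2) σ x (idx (m + 2) i)) + σ (Fin.last (m + 1)) (idx (m + 2) i) - σ (Fin.last (m + 1)) (Fin.last (m + 1)) - σ (idx (m + 2) j) (idx (m + 2) i) + σ (idx (m + 2) j) (Fin.last (m + 1)))) :=
    hdiag0 (fun i j => Real.exp (-meanFit (m + 2) σ x / 2) * ((margFit (m + 2) σ x (Fin.last (m + 1)) - margFit (m + 2) σ x (idx (m + 2) j)) * (margFit (m + 2) σ x (Fin.last (m + 1)) - margFit (m + 2) σ x (idx (m + 2) i)) + σ (Fin.last (m + 1)) (idx (m + 2) i) - σ (Fin.last (m + 1)) (Fin.last (m + 1)) - σ (idx (m + 2) j) (idx (m + 2) i) + σ (idx (m + 2) j) (Fin.last (m + 1))))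
  rw [hdiag]
  have hA : (∑ i : Fin (m + 2 - 1), x i * (Real.exp (-meanFit (m + 2) σ x / 2) * ((margFit (m + 2) σ x (Fin.last (m + 1)) - margFit (m + 2) σ x (idx (m + 2) i)) * (margFit (m + 2) σ x (Fin.last (m + 1)) - margFit (m + 2) σ x (idx (m + 2) i)) + σ (Fin.last (m + 1)) (idx (m + 2) i) - σ (Fin.last (m + 1)) (Fin.last (m + 1)) - σ (idx (m + 2) i) (idx (m + 2) i) + σ (idx (m + 2) i) (Fin.last (m + 1)))))
      = (Real.exp (-meanFit (m + 2) σ x / 2) * (margFit (m + 2) σ x (Fin.last (m + 1)) * margFit (m + 2) σ x (Fin.last (m + 1))) - Real.exp (-meanFit (m + 2) σ x / 2) * σ (Fin.last (m + 1)) (Fin.last (m + 1))) * (1 - extendFreq (m + 2) x (Fin.last (m + 1)))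
        - (2 * Real.exp (-meanFit (m + 2) σ x / 2) * margFit (m + 2) σ x (Fin.last (m + 1))) * (meanFit (m + 2) σ x - extendFreq (m + 2) x (Fin.last (m + 1)) * margFit (m + 2) σ x (Fin.last (m + 1)))
        + Real.exp (-meanFit (m + 2) σ x / 2) * ((∑ k : Fin (m + 2), extendFreq (m + 2) x k * margFit (m + 2) σ x k ^ 2) - extendFreq (m + 2) x (Fin.last (m + 1)) * margFit (m + 2) σ x (Fin.last (m + 1)) ^ 2)
        + Real.exp (-meanFit (m + 2) σ x / 2) * (margFit (m + 2) σ x (Fin.last (m + 1)) - extendFreq (m + 2) x (Fin.last (m + 1)) * σ (Fin.last (m + 1)) (Fin.last (m + 1)))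
        - Real.exp (-meanFit (m + 2) σ x / 2) * ((∑ k : Fin (m + 2), extendFreq (m + 2) x k * σ k k) - extendFreq (m + 2) x (Fin.last (m + 1)) * σ (Fin.last (m + 1)) (Fin.last (m + 1)))
        + Real.exp (-meanFit (m + 2) σ x / 2) * (margFit (m + 2) σ x (Fin.last (m + 1)) - extendFreq (m + 2) x (Fin.last (m + 1)) * σ (Fin.last (m + 1)) (Fin.last (m + 1))) := by
    calc (∑ i : Fin (m + 2 - 1), x i * (Real.exp (-meanFit (m + 2) σ x / 2) * ((margFit (m + 2) σ x (Fin.last (m + 1)) - margFit (m + 2) σ x (idx (m + 2) i)) * (margFit (m + 2) σ x (Fin.last (m + 1)) - margFit (m + 2) σ x (idx (m + 2) i)) + σ (Fin.last (m + 1)) (idx (m + 2) i) - σ (Fin.last (m + 1)) (Fin.last (m + 1)) - σ (idx (m + 2) i) (idx (m + 2) i) + σ (idx (m + 2) i) (Fin.last (m + 1)))))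
        = (Real.exp (-meanFit (m + 2) σ x / 2) * (margFit (m + 2) σ x (Fin.last (m + 1)) * margFit (m + 2) σ x (Fin.last (m + 1))) - Real.exp (-meanFit (m + 2) σ x / 2) * σ (Fin.last (m + 1)) (Fin.last (m + 1))) * (∑ i : Fin (m + 2 - 1), x i)
          - (2 * Real.exp (-meanFit (m + 2) σ x / 2) * margFit (m + 2) σ x (Fin.last (m + 1))) * (∑ i : Fin (m + 2 - 1), x i * margFit (m + 2) σ x (idx (m + 2) i))
          + Real.exp (-meanFit (m + 2) σ x / 2) * (∑ i : Fin (m + 2 - 1), x i * margFit (m + 2) σ x (idx (m + 2) i) ^ 2)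
          + Real.exp (-meanFit (m + 2) σ x / 2) * (∑ i : Fin (m + 2 - 1), x i * σ (Fin.last (m + 1)) (idx (m + 2) i))
          - Real.exp (-meanFit (m + 2) σ x / 2) * (∑ i : Fin (m + 2 - 1), x i * σ (idx (m + 2) i) (idx (m + 2) i))
          + Real.exp (-meanFit (m + 2) σ x / 2) * (∑ i : Fin (m + 2 - 1), x i * σ (idx (m + 2) i) (Fin.last (m + 1))) := by
          simp only [Finset.mul_sum, ← Finset.sum_sub_distrib, ← Finset.sum_add_distrib]
          exact Finset.sum_congr rfl fun i _ => by ring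
      _ = _ := by rw [b1, c2, c3, c4, c6 (Fin.last (m + 1)), c5 (Fin.last (m + 1))]
  rw [hA]
  have hBin : ∀ i : Fin (m + 2 - 1), (∑ j : Fin (m + 2 - 1), x i * x j * (Real.exp (-meanFit (m + 2) σ x / 2) * ((margFit (m + 2) σ x (Fin.last (m + 1)) - margFit (m + 2) σ x (idx (m + 2) j)) * (margFit (m + 2) σ x (Fin.last (m + 1)) - margFit (m + 2) σ x (idx (m + 2) i)) + σ (Fin.last (m + 1)) (idx (m + 2) i) - σ (Fin.last (m + 1)) (Fin.last (m + 1)) - σ (idx (m + 2) j) (idx (m + 2) i) + σ (idx (m + 2) j) (Fin.last (m + 1)))))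
      = (x i * Real.exp (-meanFit (m + 2) σ x / 2) * (margFit (m + 2) σ x (Fin.last (m + 1)) * (margFit (m + 2) σ x (Fin.last (m + 1)) - margFit (m + 2) σ x (idx (m + 2) i)) + σ (Fin.last (m + 1)) (idx (m + 2) i) - σ (Fin.last (m + 1)) (Fin.last (m + 1)))) * (1 - extendFreq (m + 2) x (Fin.last (m + 1))) - (x i * Real.exp (-meanFit (m + 2) σ x / 2) * (margFit (m + 2) σ x (Fin.last (m + 1)) - margFit (m + 2) σ x (idx (m + 2) i))) * (meanFit (m + 2) σ x - extendFreq (m + 2) x (Fin.last (m + 1)) * margFit (m + 2) σ x (Fin.last (m + 1))) - (x i * Real.exp (-meanFit (m + 2) σ x / 2)) * (margFit (m + 2) σ x (idx (m + 2) i) - extendFreq (m + 2) x (Fin.last (m + 1)) * σ (Fin.last (m + 1)) (idx (m + 2) i)) + (x i * Real.exp (-meanFit (m + 2) σ x / 2)) * (margFit (m + 2) σ x (Fin.last (m + 1)) - extendFreq (m + 2) x (Fin.last (m + 1)) * σ (Fin.last (m + 1)) (Fin.last (m + 1))) := by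
    intro i
    calc (∑ j : Fin (m + 2 - 1), x i * x j * (Real.exp (-meanFit (m + 2) σ x / 2) * ((margFit (m + 2) σ x (Fin.last (m + 1)) - margFit (m + 2) σ x (idx (m + 2) j)) * (margFit (m + 2) σ x (Fin.last (m + 1)) - margFit (m + 2) σ x (idx (m + 2) i)) + σ (Fin.last (m + 1)) (idx (m + 2) i) - σ (Fin.last (m + 1)) (Fin.last (m + 1)) - σ (idx (m + 2) j) (idx (m + 2) i) + σ (idx (m + 2) j) (Fin.last (m + 1)))))
        = (x i * Real.exp (-meanFit (m + 2) σ x / 2) * (margFit (m + 2) σ x (Fin.last (m + 1)) * (margFit (m + 2) σ x (Fin.last (m + 1)) - margFit (m + 2) σ x (idx (m + 2) i)) + σ (Fin.last (m + 1)) (idx (m + 2) i) - σ (Fin.last (m + 1)) (Fin.last (m + 1))))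
            * (∑ j : Fin (m + 2 - 1), x j)
          - (x i * Real.exp (-meanFit (m + 2) σ x / 2) * (margFit (m + 2) σ x (Fin.last (m + 1)) - margFit (m + 2) σ x (idx (m + 2) i))) * (∑ j : Fin (m + 2 - 1), x j * margFit (m + 2) σ x (idx (m + 2) j))
          - (x i * Real.exp (-meanFit (m + 2) σ x / 2)) * (∑ j : Fin (m + 2 - 1), x j * σ (idx (m + 2) j) (idx (m + 2) i))
          + (x i * Real.exp (-meanFit (m + 2) σ x / 2)) * (∑ j : Fin (m + 2 - 1), x j * σ (idx (m + 2) j) (Fin.last (m + 1))) := by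
          simp only [Finset.mul_sum, ← Finset.sum_sub_distrib, ← Finset.sum_add_distrib]
          exact Finset.sum_congr rfl fun j _ => by ring
      _ = _ := by rw [b1, c2, c5 (idx (m + 2) i), c5 (Fin.last (m + 1))]
  rw [show (∑ i : Fin (m + 2 - 1), ∑ j : Fin (m + 2 - 1), x i * x j * (Real.exp (-meanFit (m + 2) σ x / 2) * ((margFit (m + 2) σ x (Fin.last (m + 1)) - margFit (m + 2) σ x (idx (m + 2) j)) * (margFit (m + 2) σ x (Fin.last (m + 1)) - margFit (m + 2) σ x (idx (m + 2) i)) + σ (Fin.last (m + 1)) (idx (m + 2) i) - σ (Fin.last (m + 1)) (Fin.last (m + 1)) - σ (idx (m + 2) j) (idx (m + 2) i) + σ (idx (m + 2) j) (Fin.last (m + 1)))))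
      = ∑ i : Fin (m + 2 - 1), ((x i * Real.exp (-meanFit (m + 2) σ x / 2) * (margFit (m + 2) σ x (Fin.last (m + 1)) * (margFit (m + 2) σ x (Fin.last (m + 1)) - margFit (m + 2) σ x (idx (m + 2) i)) + σ (Fin.last (m + 1)) (idx (m + 2) i) - σ (Fin.last (m + 1)) (Fin.last (m + 1)))) * (1 - extendFreq (m + 2) x (Fin.last (m + 1))) - (x i * Real.exp (-meanFit (m + 2) σ x / 2) * (margFit (m + 2) σ x (Fin.last (m + 1)) - margFit (m + 2) σ x (idx (m + 2) i))) * (meanFit (m + 2) σ x - extendFreq (m + 2) x (Fin.last (m + 1)) * margFit (m + 2) σ x (Fin.last (m + 1))) - (x i * Real.exp (-meanFit (m + 2) σ x / 2)) * (margFit (m + 2) σ x (idx (m + 2) i) - extendFreq (m + 2) x (Fin.last (m + 1)) * σ (Fin.last (m + 1)) (idx (m + 2) i)) + (x i * Real.exp (-meanFit (m + 2) σ x / 2)) * (margFit (m + 2) σ x (Fin.last (m + 1)) - extendFreq (m + 2) x (Fin.last (m + 1)) * σ (Fin.last (m + 1)) (Fin.last (m + 1)))) from Finset.sum_congr rfl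 fun i _ => hBin i]
  have hBout : (∑ i : Fin (m + 2 - 1), ((x i * Real.exp (-meanFit (m + 2) σ x / 2) * (margFit (m + 2) σ x (Fin.last (m + 1)) * (margFit (m + 2) σ x (Fin.last (m + 1)) - margFit (m + 2) σ x (idx (m + 2) i)) + σ (Fin.last (m + 1)) (idx (m + 2) i) - σ (Fin.last (m + 1)) (Fin.last (m + 1)))) * (1 - extendFreq (m + 2) x (Fin.last (m + 1))) - (x i * Real.exp (-meanFit (m + 2) σ x / 2) * (margFit (m + 2) σ x (Fin.last (m + 1)) - margFit (m + 2) σ x (idx (m + 2) i))) * (meanFit (m + 2) σ x - extendFreq (m + 2) x (Fin.last (m + 1)) * margFit (m + 2) σ x (Fin.last (m + 1))) - (x i * Real.exp (-meanFit (m + 2) σ x / 2)) * (margFit (m + 2) σ x (idx (m + 2) i) - extendFreq (m + 2) x (Fin.last (m + 1)) * σ (Fin.last (m + 1)) (idx (m + 2) i)) + (x i * Real.exp (-meanFit (m + 2) σ x / 2)) * (margFit (m + 2) σ x (Fin.last (m + 1)) - extendFreq (m + 2) x (Fin.last (m + 1)) * σ (Fin.last (m + 1)) (Fin.last (m + 1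)))))
      = (Real.exp (-meanFit (m + 2) σ x / 2) * (margFit (m + 2) σ x (Fin.last (m + 1)) * margFit (m + 2) σ x (Fin.last (m + 1)) - σ (Fin.last (m + 1)) (Fin.last (m + 1))) * (1 - extendFreq (m + 2) x (Fin.last (m + 1))) - Real.exp (-meanFit (m + 2) σ x / 2) * margFit (m + 2) σ x (Fin.last (m + 1)) * (meanFit (m + 2) σ x - extendFreq (m + 2) x (Fin.last (m + 1)) * margFit (m + 2) σ x (Fin.last (m + 1)))
          + Real.exp (-meanFit (m + 2) σ x / 2) * (margFit (m + 2) σ x (Fin.last (m + 1)) - extendFreq (m + 2) x (Fin.last (m + 1)) * σ (Fin.last (m + 1)) (Fin.last (m + 1)))) * (1 - extendFreq (m + 2) x (Fin.last (m + 1)))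
        + (-(Real.exp (-meanFit (m + 2) σ x / 2) * margFit (m + 2) σ x (Fin.last (m + 1))) * (1 - extendFreq (m + 2) x (Fin.last (m + 1))) + Real.exp (-meanFit (m + 2) σ x / 2) * (meanFit (m + 2) σ x - extendFreq (m + 2) x (Fin.last (m + 1)) * margFit (m + 2) σ x (Fin.last (m + 1))) - Real.exp (-meanFit (m + 2) σ x / 2))
            * (meanFit (m + 2) σ x - extendFreq (m + 2) x (Fin.last (m + 1)) * margFit (m + 2) σ x (Fin.last (m + 1)))
        + (Real.exp (-meanFit (m + 2) σ x / 2) * (1 - extendFreq (m + 2) x (Fin.last (m + 1))) + Real.exp (-meanFit (m + 2) σ x / 2) * extendFreq (m + 2) x (Fin.last (m + 1))) * (margFit (m + 2) σ x (Fin.last (m + 1)) - extendFreq (m + 2) x (Fin.last (m + 1)) * σ (Fin.last (m + 1)) (Fin.last (m + 1))) := by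
    calc (∑ i : Fin (m + 2 - 1), ((x i * Real.exp (-meanFit (m + 2) σ x / 2) * (margFit (m + 2) σ x (Fin.last (m + 1)) * (margFit (m + 2) σ x (Fin.last (m + 1)) - margFit (m + 2) σ x (idx (m + 2) i)) + σ (Fin.last (m + 1)) (idx (m + 2) i) - σ (Fin.last (m + 1)) (Fin.last (m + 1)))) * (1 - extendFreq (m + 2) x (Fin.last (m + 1))) - (x i * Real.exp (-meanFit (m + 2) σ x / 2) * (margFit (m + 2) σ x (Fin.last (m + 1)) - margFit (m + 2) σ x (idx (m + 2) i))) * (meanFit (m + 2) σ x - extendFreq (m + 2) x (Fin.last (m + 1)) * margFit (m + 2) σ x (Fin.last (m + 1))) - (x i * Real.exp (-meanFit (m + 2) σ x / 2)) * (margFit (m + 2) σ x (idx (m + 2) i) - extendFreq (m + 2) x (Fin.last (m + 1)) * σ (Fin.last (m + 1)) (idx (m + 2) i)) + (x i * Real.exp (-meanFit (m + 2) σ x / 2)) * (margFit (m + 2) σ x (Fin.last (m + 1)) - extendFreq (m + 2) x (Fin.last (m + 1)) * σ (Fin.last (m + 1)) (Fin.last (m + 1)))))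
        = (Real.exp (-meanFit (m + 2) σ x / 2) * (margFit (m + 2) σ x (Fin.last (m + 1)) * margFit (m + 2) σ x (Fin.last (m + 1)) - σ (Fin.last (m + 1)) (Fin.last (m + 1))) * (1 - extendFreq (m + 2) x (Fin.last (m + 1))) - Real.exp (-meanFit (m + 2) σ x / 2) * margFit (m + 2) σ x (Fin.last (m + 1)) * (meanFit (m + 2) σ x - extendFreq (m + 2) x (Fin.last (m + 1)) * margFit (m + 2) σ x (Fin.last (m + 1)))
            + Real.exp (-meanFit (m + 2) σ x / 2) * (margFit (m + 2) σ x (Fin.last (m + 1)) - extendFreq (m + 2) x (Fin.last (m + 1)) * σ (Fin.last (m + 1)) (Fin.last (m + 1)))) * (∑ i : Fin (m + 2 - 1), x i)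
          + (-(Real.exp (-meanFit (m + 2) σ x / 2) * margFit (m + 2) σ x (Fin.last (m + 1))) * (1 - extendFreq (m + 2) x (Fin.last (m + 1))) + Real.exp (-meanFit (m + 2) σ x / 2) * (meanFit (m + 2) σ x - extendFreq (m + 2) x (Fin.last (m + 1)) * margFit (m + 2) σ x (Fin.last (m + 1))) - Real.exp (-meanFit (m + 2) σ x / 2))
              * (∑ i : Fin (m + 2 - 1), x i * margFit (m + 2) σ x (idx (m + 2) i))
          + (Real.exp (-meanFit (m + 2) σ x / 2) * (1 - extendFreq (m + 2) x (Fin.last (m + 1))) + Real.exp (-meanFit (m + 2) σ x / 2) * extendFreq (m + 2) x (Fin.last (m + 1)))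
              * (∑ i : Fin (m + 2 - 1), x i * σ (Fin.last (m + 1)) (idx (m + 2) i)) := by
          simp only [Finset.mul_sum, ← Finset.sum_sub_distrib, ← Finset.sum_add_distrib]
          exact Finset.sum_congr rfl fun i _ => by ring
      _ = _ := by rw [b1, c2, c6 (Fin.last (m + 1))]
  rw [hBout]
  have hT2 : (∑ i : Fin (m + 2 - 1), (θ (idx (m + 2) i) - (∑ k : Fin (m + 2), θ k) * x i)
        * ((margFit (m + 2) σ x (Fin.last (m + 1)) - margFit (m + 2) σ x (idx (m + 2) i)) * Real.exp (-meanFit (m + 2) σ x / 2)))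
      = (margFit (m + 2) σ x (Fin.last (m + 1)) * Real.exp (-meanFit (m + 2) σ x / 2)) * ((∑ k : Fin (m + 2), θ k) - θ (Fin.last (m + 1)))
        - Real.exp (-meanFit (m + 2) σ x / 2) * ((∑ k : Fin (m + 2), θ k * margFit (m + 2) σ x k) - θ (Fin.last (m + 1)) * margFit (m + 2) σ x (Fin.last (m + 1)))
        - ((∑ k : Fin (m + 2), θ k) * margFit (m + 2) σ x (Fin.last (m + 1)) * Real.exp (-meanFit (m + 2) σ x / 2)) * (1 - extendFreq (m + 2) x (Fin.last (m + 1)))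
        + ((∑ k : Fin (m + 2), θ k) * Real.exp (-meanFit (m + 2) σ x / 2)) * (meanFit (m + 2) σ x - extendFreq (m + 2) x (Fin.last (m + 1)) * margFit (m + 2) σ x (Fin.last (m + 1))) := by
    calc (∑ i : Fin (m + 2 - 1), (θ (idx (m + 2) i) - (∑ k : Fin (m + 2), θ k) * x i)
          * ((margFit (m + 2) σ x (Fin.last (m + 1)) - margFit (m + 2) σ x (idx (m + 2) i)) * Real.exp (-meanFit (m + 2) σ x / 2)))
        = (margFit (m + 2) σ x (Fin.last (m + 1)) * Real.exp (-meanFit (m + 2) σ x / 2)) * (∑ i : Fin (m + 2 - 1), θ (idx (m + 2) i))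
          - Real.exp (-meanFit (m + 2) σ x / 2) * (∑ i : Fin (m + 2 - 1), θ (idx (m + 2) i) * margFit (m + 2) σ x (idx (m + 2) i))
          - ((∑ k : Fin (m + 2), θ k) * margFit (m + 2) σ x (Fin.last (m + 1)) * Real.exp (-meanFit (m + 2) σ x / 2)) * (∑ i : Fin (m + 2 - 1), x i)
          + ((∑ k : Fin (m + 2), θ k) * Real.exp (-meanFit (m + 2) σ x / 2)) * (∑ i : Fin (m + 2 - 1), x i * margFit (m + 2) σ x (idx (m + 2) i)) := by
          simp only [Finset.mul_sum, ← Finset.sum_sub_distrib, ← Finset.sum_add_distrib]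
          exact Finset.sum_congr rfl fun i _ => by ring
      _ = _ := by rw [b1, c2, d1, d2]
  rw [hT2]
  have hT3 : (∑ i : Fin (m + 2 - 1), x i * (margFit (m + 2) σ x (idx (m + 2) i) - meanFit (m + 2) σ x) * ((margFit (m + 2) σ x (Fin.last (m + 1)) - margFit (m + 2) σ x (idx (m + 2) i)) * Real.exp (-meanFit (m + 2) σ x / 2)))
      = (Real.exp (-meanFit (m + 2) σ x / 2) * margFit (m + 2) σ x (Fin.last (m + 1)) + Real.exp (-meanFit (m + 2) σ x / 2) * meanFit (m + 2) σ x) * (meanFit (m + 2) σ x - extendFreq (m + 2) x (Fin.last (m + 1)) * margFit (m + 2) σ x (Fin.last (m + 1)))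
        - Real.exp (-meanFit (m + 2) σ x / 2) * ((∑ k : Fin (m + 2), extendFreq (m + 2) x k * margFit (m + 2) σ x k ^ 2) - extendFreq (m + 2) x (Fin.last (m + 1)) * margFit (m + 2) σ x (Fin.last (m + 1)) ^ 2)
        - (Real.exp (-meanFit (m + 2) σ x / 2) * meanFit (m + 2) σ x * margFit (m + 2) σ x (Fin.last (m + 1))) * (1 - extendFreq (m + 2) x (Fin.last (m + 1))) := by
    calc (∑ i : Fin (m + 2 - 1), x i * (margFit (m + 2) σ x (idx (m + 2) i) - meanFit (m + 2) σ x) * ((margFit (m + 2) σ x (Fin.last (m + 1)) - margFit (m + 2) σ x (idx (m + 2) i)) * Real.exp (-meanFit (m + 2) σ x / 2)))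
        = (Real.exp (-meanFit (m + 2) σ x / 2) * margFit (m + 2) σ x (Fin.last (m + 1)) + Real.exp (-meanFit (m + 2) σ x / 2) * meanFit (m + 2) σ x) * (∑ i : Fin (m + 2 - 1), x i * margFit (m + 2) σ x (idx (m + 2) i))
          - Real.exp (-meanFit (m + 2) σ x / 2) * (∑ i : Fin (m + 2 - 1), x i * margFit (m + 2) σ x (idx (m + 2) i) ^ 2)
          - (Real.exp (-meanFit (m + 2) σ x / 2) * meanFit (m + 2) σ x * margFit (m + 2) σ x (Fin.last (m + 1))) * (∑ i : Fin (m + 2 - 1), x i) := by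
          simp only [Finset.mul_sum, ← Finset.sum_sub_distrib, ← Finset.sum_add_distrib]
          exact Finset.sum_congr rfl fun i _ => by ring
      _ = _ := by rw [b1, c2, c3]
  rw [hT3]
  ring
end

section
/- Second-order differential identity for weighted Jacobi factors (key step in the proof of Lemma 3): Let a > 0, B > 0 be real, and n, N ∈ ℕ. Define g(x) := (1 − x)^N R_n^{(a, B+2N)}(x). Then for every x ∈ (0,1): x(1−x) g''(x) + (a − (a+B) x) g'(x) = [ −(n+N)(n+N−1+a+B) + N(N−1+B)/(1−x) ] · g(x). -/
open MeasureTheory Filter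

noncomputable section

namespace WJode

/-- coefficient -/
def jc (a b : ℝ) (n s : ℕ) : ℝ :=
  (Real.Gamma ((n : ℝ) + b) / (Real.Gamma ((n : ℝ) - (s : ℝ) + 1) * Real.Gamma (b + (s : ℝ)))) *
    (Real.Gamma ((n : ℝ) + a) / (Real.Gamma ((s : ℝ) + 1) * Real.Gamma (a + (n : ℝ) - (s : ℝ))))

lemma modJacobi_eq (a b : ℝ) (n : ℕ) (x : ℝ) :
    modJacobi a b n x = ∑ s ∈ Finset.range (n + 1), jc a b n s * ((x - 1) ^ s * x ^ (n - s)) := by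
  unfold modJacobi jc
  refine Finset.sum_congr rfl fun s _ => by ring

def P1 (a b : ℝ) (n : ℕ) (x : ℝ) : ℝ :=
  ∑ s ∈ Finset.range (n + 1), jc a b n s *
    ((s : ℝ) * (x - 1) ^ (s - 1) * x ^ (n - s) +
      ((n - s : ℕ) : ℝ) * (x - 1) ^ s * x ^ (n - s - 1))

def P2 (a b : ℝ) (n : ℕ) (x : ℝ) : ℝ :=
  ∑ s ∈ Finset.range (n + 1), jc a b n s *
    ((s : ℝ) * (((s - 1 : ℕ) : ℝ) * (x - 1) ^ (s - 1 - 1) * x ^ (n - s) +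
        ((n - s : ℕ) : ℝ) * (x - 1) ^ (s - 1) * x ^ (n - s - 1)) +
      ((n - s : ℕ) : ℝ) * ((s : ℝ) * (x - 1) ^ (s - 1) * x ^ (n - s - 1) +
        ((n - s - 1 : ℕ) : ℝ) * (x - 1) ^ s * x ^ (n - s - 1 - 1)))

lemma hasDerivAt_modJacobi (a b : ℝ) (n : ℕ) (x : ℝ) :
    HasDerivAt (fun y => modJacobi a b n y) (P1 a b n x) x := by
  have : HasDerivAt (fun y => ∑ s ∈ Finset.range (n + 1), jc a b n s * ((y - 1) ^ s * y ^ (n - s)))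
      (P1 a b n x) x := by
    unfold P1
    refine HasDerivAt.fun_sum fun s _ => ?_
    have h1 : HasDerivAt (fun y : ℝ => (y - 1) ^ s) ((s : ℝ) * (x - 1) ^ (s - 1)) x := by
      simpa using ((hasDerivAt_id x).sub_const 1).fun_pow s
    have h2 : HasDerivAt (fun y : ℝ => y ^ (n - s)) (((n - s : ℕ) : ℝ) * x ^ (n - s - 1)) x :=
      hasDerivAt_pow _ x
    have := (h1.fun_mul h2).const_mul (jc a b n s)
    convert this using 1
    · rfl
    ring
  simpa only [← modJacobi_eq] using this

lemma hasDerivAt_P1 (a b : ℝ) (n : ℕ) (x : ℝ) :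
    HasDerivAt (fun y => P1 a b n y) (P2 a b n x) x := by
  unfold P1 P2
  refine HasDerivAt.fun_sum fun s _ => ?_
  have h1 : HasDerivAt (fun y : ℝ => (y - 1) ^ (s - 1)) (((s - 1 : ℕ) : ℝ) * (x - 1) ^ (s - 1 - 1)) x := by
    simpa using ((hasDerivAt_id x).sub_const 1).fun_pow (s - 1)
  have h2 : HasDerivAt (fun y : ℝ => y ^ (n - s)) (((n - s : ℕ) : ℝ) * x ^ (n - s - 1)) x :=
    hasDerivAt_pow _ x
  have h3 : HasDerivAt (fun y : ℝ => (y - 1) ^ s) ((s : ℝ) * (x - 1) ^ (s - 1)) x := by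
    simpa using ((hasDerivAt_id x).sub_const 1).fun_pow s
  have h4 : HasDerivAt (fun y : ℝ => y ^ (n - s - 1)) (((n - s - 1 : ℕ) : ℝ) * x ^ (n - s - 1 - 1)) x :=
    hasDerivAt_pow _ x
  have := (((h1.fun_mul h2).const_mul (s : ℝ)).fun_add ((h3.fun_mul h4).const_mul ((n - s : ℕ) : ℝ))).const_mul
      (jc a b n s)
  convert this using 1
  · rfl
  · funext y; ring
  · ring


set_option maxHeartbeats 1000000 in
lemma ratio (a b : ℝ) (ha : 0 < a) (hb : 0 < b) {n s : ℕ} (hsn : s < n) :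
    ((s : ℝ) + 1) * ((s : ℝ) + b) * jc a b n (s + 1) =
      ((n : ℝ) - s) * ((n : ℝ) - s + a - 1) * jc a b n s := by
  have hns : (0 : ℝ) < (n : ℝ) - s := by
    have : (s : ℝ) < n := by exact_mod_cast hsn
    linarith
  have hns1 : (0 : ℝ) ≤ (n : ℝ) - s - 1 := by
    have : (s : ℝ) + 1 ≤ n := by exact_mod_cast hsn
    linarith
  unfold jc
  simp only [Nat.cast_add, Nat.cast_one]
  have g1 : Real.Gamma ((n : ℝ) - ((s : ℝ) + 1) + 1) = Real.Gamma ((n : ℝ) - s) := by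
    rw [show (n : ℝ) - ((s : ℝ) + 1) + 1 = (n : ℝ) - s by ring]
  have g2 : Real.Gamma ((n : ℝ) - (s : ℝ) + 1) = ((n : ℝ) - s) * Real.Gamma ((n : ℝ) - s) :=
    Real.Gamma_add_one hns.ne'
  have g3 : Real.Gamma (b + ((s : ℝ) + 1)) = (b + s) * Real.Gamma (b + s) := by
    rw [show b + ((s : ℝ) + 1) = (b + s) + 1 by ring]
    exact Real.Gamma_add_one (by positivity)
  have g4 : Real.Gamma ((s : ℝ) + 1 + 1) = ((s : ℝ) + 1) * Real.Gamma ((s : ℝ) + 1) :=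
    Real.Gamma_add_one (by positivity)
  have g5 : Real.Gamma (a + (n : ℝ) - (s : ℝ)) =
      (a + (n : ℝ) - s - 1) * Real.Gamma (a + (n : ℝ) - s - 1) := by
    have h : (0 : ℝ) < a + (n : ℝ) - s - 1 := by linarith
    have h2 := Real.Gamma_add_one h.ne'
    rw [show a + (n : ℝ) - s - 1 + 1 = a + (n : ℝ) - s by ring] at h2
    exact h2
  have g6 : Real.Gamma (a + (n : ℝ) - ((s : ℝ) + 1)) = Real.Gamma (a + (n : ℝ) - s - 1) := by
    rw [show a + (n : ℝ) - ((s : ℝ) + 1) = a + (n : ℝ) - s - 1 by ring]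
  have p1 : 0 < Real.Gamma ((n : ℝ) - s) := Real.Gamma_pos_of_pos hns
  have p2 : 0 < Real.Gamma (b + s) := Real.Gamma_pos_of_pos (by positivity)
  have p3 : 0 < Real.Gamma ((s : ℝ) + 1) := Real.Gamma_pos_of_pos (by positivity)
  have p4 : 0 < Real.Gamma (a + (n : ℝ) - s - 1) := Real.Gamma_pos_of_pos (by linarith)
  have q1 : (0:ℝ) < b + s := by positivity
  have q2 : (0:ℝ) < (s:ℝ) + 1 := by positivity
  have q3 : (0:ℝ) < a + (n:ℝ) - s - 1 := by linarith
  rw [g1, g2, g3, g4, g5, g6]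
  field_simp [p1.ne', p2.ne', p3.ne', p4.ne', hns.ne', q1.ne', q2.ne', q3.ne']
  ring

lemma perterm (a b : ℝ) (n : ℕ) (x : ℝ) {s : ℕ} (hs : s ≤ n) :
    x * (1 - x) *
        ((s : ℝ) * (((s - 1 : ℕ) : ℝ) * (x - 1) ^ (s - 1 - 1) * x ^ (n - s) +
            ((n - s : ℕ) : ℝ) * (x - 1) ^ (s - 1) * x ^ (n - s - 1)) +
          ((n - s : ℕ) : ℝ) * ((s : ℝ) * (x - 1) ^ (s - 1) * x ^ (n - s - 1) +
            ((n - s - 1 : ℕ) : ℝ) * (x - 1) ^ s * x ^ (n - s - 1 - 1))) +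
      (a - (a + b) * x) *
        ((s : ℝ) * (x - 1) ^ (s - 1) * x ^ (n - s) +
          ((n - s : ℕ) : ℝ) * (x - 1) ^ s * x ^ (n - s - 1)) +
      (n : ℝ) * ((n : ℝ) + a + b - 1) * ((x - 1) ^ s * x ^ (n - s)) =
    -((s : ℝ) * ((s : ℝ) - 1 + b)) * ((x - 1) ^ (s - 1) * x ^ (n - (s - 1))) +
      ((n : ℝ) * ((n : ℝ) + a + b - 1) - 2 * s * ((n : ℝ) - s) - a * s - b * ((n : ℝ) - s)) *
        ((x - 1) ^ s * x ^ (n - s)) +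
      -(((n : ℝ) - s) * ((n : ℝ) - s - 1 + a)) * ((x - 1) ^ (s + 1) * x ^ (n - (s + 1))) := by
  obtain ⟨k, rfl⟩ := Nat.exists_eq_add_of_le hs
  match s, k with
  | 0, 0 => norm_num
  | 0, 1 => norm_num; ring
  | 0, k + 2 =>
    simp only [Nat.zero_add, Nat.sub_zero, show (0 : ℕ) - 1 = 0 from rfl,
      show k + 2 - 1 = k + 1 from by omega, show k + 1 - 1 = k from by omega,
      show k + 2 - (0 + 1) = k + 1 from by omega, show k + 2 - (0 - 1) = k + 2 from by omega]
    push_cast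
    ring
  | 1, 0 => norm_num; ring
  | 1, 1 => norm_num; ring
  | 1, k + 2 =>
    simp only [show (1 : ℕ) - 1 = 0 from rfl, show (0 : ℕ) - 1 = 0 from rfl, Nat.sub_zero,
      show 1 + (k + 2) - 1 = k + 2 from by omega, show k + 2 - 1 = k + 1 from by omega,
      show k + 1 - 1 = k from by omega, show 1 + (k + 2) - (1 + 1) = k + 1 from by omega,
      show 1 + (k + 2) - 0 = k + 3 from by omega]
    push_cast
    ring
  | s + 2, 0 =>
    simp only [show s + 2 - 1 = s + 1 from by omega, show s + 1 - 1 = s from by omega,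
      show s + 2 + 0 - (s + 2) = 0 from by omega, show (0 : ℕ) - 1 = 0 from rfl,
      show s + 2 + 0 - (s + 1) = 1 from by omega,
      show s + 2 + 0 - (s + 2 + 1) = 0 from by omega]
    push_cast
    ring
  | s + 2, 1 =>
    simp only [show s + 2 - 1 = s + 1 from by omega, show s + 1 - 1 = s from by omega,
      show s + 2 + 1 - (s + 2) = 1 from by omega, show (1 : ℕ) - 1 = 0 from rfl,
      show (0 : ℕ) - 1 = 0 from rfl, show s + 2 + 1 - (s + 1) = 2 from by omega,
      show s + 2 + 1 - (s + 2 + 1) = 0 from by omega]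
    push_cast
    ring
  | s + 2, k + 2 =>
    simp only [show s + 2 - 1 = s + 1 from by omega, show s + 1 - 1 = s from by omega,
      show s + 2 + (k + 2) - (s + 2) = k + 2 from by omega,
      show k + 2 - 1 = k + 1 from by omega, show k + 1 - 1 = k from by omega,
      show s + 2 + (k + 2) - (s + 1) = k + 3 from by omega,
      show s + 2 + (k + 2) - (s + 2 + 1) = k + 1 from by omega]
    push_cast
    ring


set_option maxHeartbeats 1000000 in
lemma ode (a b : ℝ) (ha : 0 < a) (hb : 0 < b) (n : ℕ) (x : ℝ) :
    x * (1 - x) * P2 a b n x + (a - (a + b) * x) * P1 a b n x +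
      (n : ℝ) * ((n : ℝ) + a + b - 1) * modJacobi a b n x = 0 := by
  have step1 : x * (1 - x) * P2 a b n x + (a - (a + b) * x) * P1 a b n x +
      (n : ℝ) * ((n : ℝ) + a + b - 1) * modJacobi a b n x =
      (∑ s ∈ Finset.range (n + 1),
        -((s : ℝ) * ((s : ℝ) - 1 + b)) * jc a b n s * ((x - 1) ^ (s - 1) * x ^ (n - (s - 1)))) +
      (∑ s ∈ Finset.range (n + 1),
        ((n : ℝ) * ((n : ℝ) + a + b - 1) - 2 * s * ((n : ℝ) - s) - a * s - b * ((n : ℝ) - s)) *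
          jc a b n s * ((x - 1) ^ s * x ^ (n - s))) +
      (∑ s ∈ Finset.range (n + 1),
        -(((n : ℝ) - s) * ((n : ℝ) - s - 1 + a)) * jc a b n s *
          ((x - 1) ^ (s + 1) * x ^ (n - (s + 1)))) := by
    rw [modJacobi_eq]
    unfold P1 P2
    rw [Finset.mul_sum, Finset.mul_sum, Finset.mul_sum, ← Finset.sum_add_distrib,
      ← Finset.sum_add_distrib, ← Finset.sum_add_distrib, ← Finset.sum_add_distrib]
    refine Finset.sum_congr rfl fun s hs => ?_
    have h := perterm a b n x (Nat.lt_succ_iff.mp (Finset.mem_range.mp hs))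
    linear_combination jc a b n s * h
  have hA : (∑ s ∈ Finset.range (n + 1),
        -((s : ℝ) * ((s : ℝ) - 1 + b)) * jc a b n s * ((x - 1) ^ (s - 1) * x ^ (n - (s - 1)))) =
      ∑ s ∈ Finset.range (n + 1),
        -(((n : ℝ) - s) * ((n : ℝ) - s + a - 1)) * jc a b n s * ((x - 1) ^ s * x ^ (n - s)) := by
    have l1 : (∑ s ∈ Finset.range (n + 1),
        -((s : ℝ) * ((s : ℝ) - 1 + b)) * jc a b n s * ((x - 1) ^ (s - 1) * x ^ (n - (s - 1)))) =
        ∑ s ∈ Finset.range n,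
          -(((s : ℕ) + 1 : ℝ) * (((s : ℕ) + 1 : ℝ) - 1 + b)) * jc a b n (s + 1) *
            ((x - 1) ^ (s + 1 - 1) * x ^ (n - (s + 1 - 1))) := by
      rw [Finset.sum_range_succ' (fun s =>
        -((s : ℝ) * ((s : ℝ) - 1 + b)) * jc a b n s * ((x - 1) ^ (s - 1) * x ^ (n - (s - 1)))) n]
      push_cast
      simp
    have l2 : (∑ s ∈ Finset.range (n + 1),
        -(((n : ℝ) - s) * ((n : ℝ) - s + a - 1)) * jc a b n s * ((x - 1) ^ s * x ^ (n - s))) =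
        ∑ s ∈ Finset.range n,
          -(((n : ℝ) - s) * ((n : ℝ) - s + a - 1)) * jc a b n s * ((x - 1) ^ s * x ^ (n - s)) := by
      rw [Finset.sum_range_succ]
      simp
    rw [l1, l2]
    refine Finset.sum_congr rfl fun s hs => ?_
    have hlt : s < n := Finset.mem_range.mp hs
    have hr := ratio a b ha hb hlt
    simp only [Nat.add_sub_cancel]
    linear_combination (-((x - 1) ^ s * x ^ (n - s))) * hr
  have hAB : (∑ s ∈ Finset.range (n + 1),
        -(((n : ℝ) - s) * ((n : ℝ) - s + a - 1)) * jc a b n s * ((x - 1) ^ s * x ^ (n - s))) +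
      (∑ s ∈ Finset.range (n + 1),
        ((n : ℝ) * ((n : ℝ) + a + b - 1) - 2 * s * ((n : ℝ) - s) - a * s - b * ((n : ℝ) - s)) *
          jc a b n s * ((x - 1) ^ s * x ^ (n - s))) =
      ∑ s ∈ Finset.range (n + 1),
        (s : ℝ) * ((s : ℝ) - 1 + b) * jc a b n s * ((x - 1) ^ s * x ^ (n - s)) := by
    rw [← Finset.sum_add_distrib]
    exact Finset.sum_congr rfl fun s _ => by ring
  have hD : (∑ s ∈ Finset.range (n + 1),
        (s : ℝ) * ((s : ℝ) - 1 + b) * jc a b n s * ((x - 1) ^ s * x ^ (n - s))) =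
      ∑ s ∈ Finset.range n,
        (((s : ℕ) + 1 : ℝ)) * ((((s : ℕ) + 1 : ℝ)) - 1 + b) * jc a b n (s + 1) *
          ((x - 1) ^ (s + 1) * x ^ (n - (s + 1))) := by
    rw [Finset.sum_range_succ' (fun s =>
      (s : ℝ) * ((s : ℝ) - 1 + b) * jc a b n s * ((x - 1) ^ s * x ^ (n - s))) n]
    push_cast
    simp
  have hC : (∑ s ∈ Finset.range (n + 1),
        -(((n : ℝ) - s) * ((n : ℝ) - s - 1 + a)) * jc a b n s *
          ((x - 1) ^ (s + 1) * x ^ (n - (s + 1)))) =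
      ∑ s ∈ Finset.range n,
        -(((n : ℝ) - s) * ((n : ℝ) - s - 1 + a)) * jc a b n s *
          ((x - 1) ^ (s + 1) * x ^ (n - (s + 1))) := by
    rw [Finset.sum_range_succ]
    simp
  have hz : (∑ s ∈ Finset.range n,
        (((s : ℕ) + 1 : ℝ)) * ((((s : ℕ) + 1 : ℝ)) - 1 + b) * jc a b n (s + 1) *
          ((x - 1) ^ (s + 1) * x ^ (n - (s + 1)))) +
      (∑ s ∈ Finset.range n,
        -(((n : ℝ) - s) * ((n : ℝ) - s - 1 + a)) * jc a b n s *
          ((x - 1) ^ (s + 1) * x ^ (n - (s + 1)))) = 0 := by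
    rw [← Finset.sum_add_distrib]
    refine Finset.sum_eq_zero fun s hs => ?_
    have hr := ratio a b ha hb (Finset.mem_range.mp hs)
    linear_combination ((x - 1) ^ (s + 1) * x ^ (n - (s + 1))) * hr
  rw [step1, hA, hC]
  linarith [hAB, hD, hz]

end WJode

end

/-- key step in the proof of Lemma 3: for `g(x) = (1-x)^N R_n^{(a,B+2N)}(x)`
and `x ∈ (0,1)`:
`x(1-x) g''(x) + (a - (a+B)x) g'(x)
  = [-(n+N)(n+N-1+a+B) + N(N-1+B)/(1-x)] g(x)`. -/
theorem weighted_jacobi_ode (a B : ℝ) (ha : 0 < a) (hB : 0 < B) (n N : ℕ)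
    (x : ℝ) (hx : x ∈ Set.Ioo (0 : ℝ) 1) :
    x * (1 - x) *
        deriv (deriv fun y => (1 - y) ^ N * modJacobi a (B + 2 * (N : ℝ)) n y) x +
      (a - (a + B) * x) *
        deriv (fun y => (1 - y) ^ N * modJacobi a (B + 2 * (N : ℝ)) n y) x =
      (-(((n : ℝ) + N) * ((n : ℝ) + N - 1 + a + B)) + (N : ℝ) * ((N : ℝ) - 1 + B) / (1 - x)) *
        ((1 - x) ^ N * modJacobi a (B + 2 * (N : ℝ)) n x) := by
  have hb : (0 : ℝ) < B + 2 * (N : ℝ) := by positivity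
  have hx1 : (1 : ℝ) - x ≠ 0 := by
    have := hx.2
    intro h; simp only [Set.mem_Ioo] at hx; linarith [sub_ne_zero.mpr (ne_of_gt (by linarith : x < 1))]
  have hG : ∀ y : ℝ, HasDerivAt (fun z => (1 - z) ^ N * modJacobi a (B + 2 * (N : ℝ)) n z)
      ((1 - y) ^ N * WJode.P1 a (B + 2 * (N : ℝ)) n y -
        (N : ℝ) * (1 - y) ^ (N - 1) * modJacobi a (B + 2 * (N : ℝ)) n y) y := by
    intro y
    have h1 : HasDerivAt (fun z : ℝ => (1 - z) ^ N) (-((N : ℝ) * (1 - y) ^ (N - 1))) y := by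
      simpa using ((hasDerivAt_const y (1 : ℝ)).fun_sub (hasDerivAt_id y)).fun_pow N
    have h2 := WJode.hasDerivAt_modJacobi a (B + 2 * (N : ℝ)) n y
    have : HasDerivAt (F := ℝ) _ _ y := h1.fun_mul h2
    convert this using 1
    ring
  have hG' : HasDerivAt (fun y => (1 - y) ^ N * WJode.P1 a (B + 2 * (N : ℝ)) n y -
        (N : ℝ) * (1 - y) ^ (N - 1) * modJacobi a (B + 2 * (N : ℝ)) n y)
      ((1 - x) ^ N * WJode.P2 a (B + 2 * (N : ℝ)) n x -
        2 * (N : ℝ) * (1 - x) ^ (N - 1) * WJode.P1 a (B + 2 * (N : ℝ)) n x +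
        (N : ℝ) * ((N - 1 : ℕ) : ℝ) * (1 - x) ^ (N - 1 - 1) *
          modJacobi a (B + 2 * (N : ℝ)) n x) x := by
    have h1 : HasDerivAt (fun z : ℝ => (1 - z) ^ N) (-((N : ℝ) * (1 - x) ^ (N - 1))) x := by
      simpa using ((hasDerivAt_const x (1 : ℝ)).fun_sub (hasDerivAt_id x)).fun_pow N
    have h1' : HasDerivAt (fun z : ℝ => (1 - z) ^ (N - 1))
        (-(((N - 1 : ℕ) : ℝ) * (1 - x) ^ (N - 1 - 1))) x := by
      simpa using ((hasDerivAt_const x (1 : ℝ)).fun_sub (hasDerivAt_id x)).fun_pow (N - 1)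
    have h2 := WJode.hasDerivAt_P1 a (B + 2 * (N : ℝ)) n x
    have h3 := WJode.hasDerivAt_modJacobi a (B + 2 * (N : ℝ)) n x
    have hmul : HasDerivAt (fun z : ℝ => (N : ℝ) * ((1 - z) ^ (N - 1) *
        modJacobi a (B + 2 * (N : ℝ)) n z))
        ((N : ℝ) * ((-(((N - 1 : ℕ) : ℝ) * (1 - x) ^ (N - 1 - 1))) *
            modJacobi a (B + 2 * (N : ℝ)) n x +
          (1 - x) ^ (N - 1) * WJode.P1 a (B + 2 * (N : ℝ)) n x)) x :=
      (h1'.mul h3).const_mul (N : ℝ)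
    have : HasDerivAt (F := ℝ) _ _ x := (h1.fun_mul h2).fun_sub hmul
    convert this using 1
    · funext y; ring
    · ring
  have e1 : (deriv fun y => (1 - y) ^ N * modJacobi a (B + 2 * (N : ℝ)) n y) = fun y =>
      (1 - y) ^ N * WJode.P1 a (B + 2 * (N : ℝ)) n y -
        (N : ℝ) * (1 - y) ^ (N - 1) * modJacobi a (B + 2 * (N : ℝ)) n y :=
    funext fun y => (hG y).deriv
  rw [e1, hG'.deriv]
  have key := WJode.ode a (B + 2 * (N : ℝ)) ha hb n x
  have hdiv : (-(((n : ℝ) + N) * ((n : ℝ) + N - 1 + a + B)) + (N : ℝ) * ((N : ℝ) - 1 + B) / (1 - x)) =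
      ((-(((n : ℝ) + N) * ((n : ℝ) + N - 1 + a + B))) * (1 - x) + (N : ℝ) * ((N : ℝ) - 1 + B)) /
        (1 - x) := by
    field_simp
  rw [hdiv, div_mul_eq_mul_div, eq_div_iff hx1]
  match N with
  | 0 =>
    simp only [show (0 : ℕ) - 1 = 0 from rfl, pow_zero]
    norm_num at key ⊢
    linear_combination (1 - x) * key
  | 1 =>
    simp only [show (1 : ℕ) - 1 = 0 from rfl, show (0 : ℕ) - 1 = 0 from rfl, pow_zero, pow_one]
    norm_num at key ⊢
    linear_combination (1 - x) ^ 2 * key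
  | (M + 2) =>
    simp only [show M + 2 - 1 = M + 1 from by omega, show M + 1 - 1 = M from by omega]
    push_cast at key ⊢
    linear_combination (1 - x) ^ (M + 3) * key
end
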